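/- The Riccati terminal value problem η'(t) = 2(a + (1 − 1/(2N))q)η(t) + (1 − 1/N)η(t)² − λ on [0,T] with η(T) = c has a unique C¹ solution η defined on all of [0,T], and this solution satisfies min{c, η⁺} ≤ η(t) ≤ max{c, η⁺} for all t ∈ [0,T], where η⁺ = (−β̃ + √(β̃² + (1 − 1/N)λ))/(1 − 1/N) and β̃ = a + (1 − 1/(2N))q; in particular η(t) ≥ 0 on [0,T]. -/

import Mathlib

open Set

lemma riccati_alg (βt cN lam ηplus δ W : ℝ) (hW : W ≠ 0)
    (hδ : δ = 2 * βt + 2 * cN * ηplus)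
    (hroot : cN * ηplus ^ 2 + 2 * βt * ηplus - lam = 0) :
    (δ * W + cN) / W ^ 2 = 2 * βt * (ηplus + W⁻¹) + cN * (ηplus + W⁻¹) ^ 2 - lam := by
  have h1 : 2 * βt * (ηplus + W⁻¹) + cN * (ηplus + W⁻¹) ^ 2 - lam
      = δ * W⁻¹ + cN * (W⁻¹) ^ 2 := by
    linear_combination hroot - W⁻¹ * hδ
  rw [h1]
  field_simp

/-- Uniqueness for the Riccati ODE with terminal condition. -/
lemma riccati_uniq (βt cN lam T : ℝ) (hT : 0 ≤ T) (f g : ℝ → ℝ)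
    (hf : ∀ t ∈ Icc (0 : ℝ) T, HasDerivAt f (2 * βt * f t + cN * f t ^ 2 - lam) t)
    (hg : ∀ t ∈ Icc (0 : ℝ) T, HasDerivAt g (2 * βt * g t + cN * g t ^ 2 - lam) t)
    (hfg : f T = g T) : EqOn f g (Icc (0 : ℝ) T) := by
  have hfc : ContinuousOn f (Icc (0 : ℝ) T) := fun t ht =>
    ((hf t ht).continuousAt).continuousWithinAt
  have hgc : ContinuousOn g (Icc (0 : ℝ) T) := fun t ht =>
    ((hg t ht).continuousAt).continuousWithinAt
  obtain ⟨C, hC⟩ := isCompact_Icc.exists_bound_of_continuousOn hfc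
  obtain ⟨D, hD⟩ := isCompact_Icc.exists_bound_of_continuousOn hgc
  set R : ℝ := max C D with hRdef
  have hmem0 : (0 : ℝ) ∈ Icc (0 : ℝ) T := ⟨le_refl _, hT⟩
  have hR0 : 0 ≤ R := le_trans (norm_nonneg (f 0)) (le_trans (hC 0 hmem0) (le_max_left _ _))
  have hfR : ∀ t ∈ Icc (0 : ℝ) T, |f t| ≤ R := fun t ht =>
    le_trans (hC t ht) (le_max_left _ _)
  have hgR : ∀ t ∈ Icc (0 : ℝ) T, |g t| ≤ R := fun t ht =>
    le_trans (hD t ht) (le_max_right _ _)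
  set K : NNReal := Real.toNNReal (2 * |βt| + 2 * |cN| * R) with hK
  have hKcoe : (K : ℝ) = 2 * |βt| + 2 * |cN| * R := by
    rw [hK, Real.coe_toNNReal]
    positivity
  set v : ℝ → ℝ → ℝ := fun _ x => 2 * βt * x + cN * x ^ 2 - lam with hv
  have hlip : ∀ t : ℝ, LipschitzOnWith K (v t) (Metric.closedBall (0 : ℝ) R) := by
    intro t
    apply LipschitzOnWith.of_dist_le_mul
    intro x hx y hy
    rw [Metric.mem_closedBall, Real.dist_eq, sub_zero] at hx hy
    rw [Real.dist_eq, Real.dist_eq, hKcoe]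
    have h1 : v t x - v t y = (x - y) * (2 * βt + cN * (x + y)) := by
      simp only [hv]; ring
    rw [h1, abs_mul]
    have h2 : |2 * βt + cN * (x + y)| ≤ 2 * |βt| + 2 * |cN| * R := by
      calc |2 * βt + cN * (x + y)| ≤ |2 * βt| + |cN * (x + y)| := abs_add_le _ _
        _ = 2 * |βt| + |cN| * |x + y| := by rw [abs_mul, abs_mul, abs_two]
        _ ≤ 2 * |βt| + |cN| * (|x| + |y|) := by
            have := abs_add_le x y
            nlinarith [abs_nonneg (x + y), abs_nonneg cN]
        _ ≤ 2 * |βt| + 2 * |cN| * R := by nlinarith [abs_nonneg cN]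
    calc |x - y| * |2 * βt + cN * (x + y)| ≤ |x - y| * (2 * |βt| + 2 * |cN| * R) := by
          nlinarith [abs_nonneg (x - y)]
      _ = (2 * |βt| + 2 * |cN| * R) * |x - y| := by ring
  exact ODE_solution_unique_of_mem_Icc_left (fun t _ => hlip t) hfc
    (fun t ht => (hf t ⟨le_of_lt ht.1, ht.2⟩).hasDerivWithinAt)
    (fun t ht => by
      rw [Metric.mem_closedBall, Real.dist_eq, sub_zero]
      exact hfR t ⟨le_of_lt ht.1, ht.2⟩)
    hgc
    (fun t ht => (hg t ⟨le_of_lt ht.1, ht.2⟩).hasDerivWithinAt)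
    (fun t ht => by
      rw [Metric.mem_closedBall, Real.dist_eq, sub_zero]
      exact hgR t ⟨le_of_lt ht.1, ht.2⟩)
    hfg

set_option maxHeartbeats 1200000 in
/-- The Riccati terminal value problem
`η' = 2(a + (1 − 1/(2N))q)η + (1 − 1/N)η² − λ` on `[0,T]` with `η(T) = c`
has a unique C¹ solution on all of `[0,T]`, which satisfies
`min {c, η⁺} ≤ η(t) ≤ max {c, η⁺}` on `[0,T]`, where
`η⁺ = (−β̃ + √(β̃² + (1 − 1/N)λ))/(1 − 1/N)` and `β̃ = a + (1 − 1/(2N))q`;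
in particular `η(t) ≥ 0` on `[0,T]`. -/
theorem riccati_eta_existence_uniqueness_and_bounds
    (N : ℕ) (hN : 2 ≤ N) (T a q ε c : ℝ)
    (hT : 0 < T) (ha : 0 ≤ a) (hq : 0 ≤ q) (hc : 0 ≤ c) (hqε : q ^ 2 ≤ ε)
    (βt cN lam ηplus : ℝ)
    (hβt : βt = a + (1 - 1 / (2 * (N : ℝ))) * q)
    (hcN : cN = 1 - 1 / (N : ℝ))
    (hlam : lam = ε - q ^ 2)
    (hηp : ηplus = (-βt + Real.sqrt (βt ^ 2 + cN * lam)) / cN) :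
    ∃ η : ℝ → ℝ,
      (∀ t ∈ Icc (0 : ℝ) T, HasDerivAt η (2 * βt * η t + cN * η t ^ 2 - lam) t) ∧
      η T = c ∧
      (∀ t ∈ Icc (0 : ℝ) T, min c ηplus ≤ η t ∧ η t ≤ max c ηplus ∧ 0 ≤ η t) ∧
      (∀ ζ : ℝ → ℝ,
        (∀ t ∈ Icc (0 : ℝ) T, HasDerivAt ζ (2 * βt * ζ t + cN * ζ t ^ 2 - lam) t) →
        ζ T = c → EqOn η ζ (Icc (0 : ℝ) T)) := by
  have hN2 : (2:ℝ) ≤ (N:ℝ) := by exact_mod_cast hN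
  have hNpos : (0:ℝ) < (N:ℝ) := by linarith
  have hcNpos : 0 < cN := by
    rw [hcN]
    have h1 : 1/(N:ℝ) ≤ 1/2 := by
      apply one_div_le_one_div_of_le <;> linarith
    linarith
  have hβnn : 0 ≤ βt := by
    rw [hβt]
    have h1 : 0 ≤ 1 - 1/(2*(N:ℝ)) := by
      rw [sub_nonneg]
      apply div_le_one_of_le₀ <;> nlinarith
    nlinarith
  have hlamnn : 0 ≤ lam := by rw [hlam]; linarith
  set s := Real.sqrt (βt^2 + cN*lam) with hs
  have hsnn : 0 ≤ s := Real.sqrt_nonneg _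
  have hs2 : s^2 = βt^2 + cN*lam := Real.sq_sqrt (by positivity)
  have hβs : βt ≤ s := by nlinarith [mul_nonneg hcNpos.le hlamnn]
  have hηps : ηplus = (s - βt)/cN := by rw [hηp]; ring_nf
  have hηpnn : 0 ≤ ηplus := by
    rw [hηps]; exact div_nonneg (by linarith) hcNpos.le
  have hroot : cN*ηplus^2 + 2*βt*ηplus - lam = 0 := by
    rw [hηps]
    field_simp
    linear_combination hs2
  have hδdef : 2*s = 2*βt + 2*cN*ηplus := by
    rw [hηps]; field_simp; ring
  have hcNη : cN * ηplus = s - βt := by rw [hηps]; field_simp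
  clear_value s
  -- It suffices to find a solution with the bounds; uniqueness is generic.
  suffices h : ∃ η : ℝ → ℝ,
      (∀ t ∈ Icc (0 : ℝ) T, HasDerivAt η (2 * βt * η t + cN * η t ^ 2 - lam) t) ∧
      η T = c ∧
      (∀ t ∈ Icc (0 : ℝ) T, min c ηplus ≤ η t ∧ η t ≤ max c ηplus ∧ 0 ≤ η t) by
    obtain ⟨η, h1, h2, h3⟩ := h
    exact ⟨η, h1, h2, h3, fun ζ hζ hζT =>
      riccati_uniq βt cN lam T hT.le η ζ h1 hζ (by rw [h2, hζT])⟩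
  by_cases hceq : c = ηplus
  · -- constant solution
    refine ⟨fun _ => c, ?_, rfl, ?_⟩
    · intro t _
      have hz : 2*βt*c + cN*c^2 - lam = 0 := by rw [hceq]; linarith [hroot]
      rw [hz]
      exact hasDerivAt_const t c
    · intro t _
      refine ⟨min_le_left _ _, le_max_left _ _, hc⟩
  · by_cases hs0 : s = 0
    · -- degenerate case: βt = 0, lam = 0, ηplus = 0
      have h00 : βt^2 + cN*lam = 0 := by rw [← hs2, hs0]; ring
      have hβ0 : βt = 0 :=
        le_antisymm (by nlinarith [mul_nonneg hcNpos.le hlamnn]) hβnn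
      have hl0 : lam = 0 :=
        le_antisymm (by nlinarith [sq_nonneg βt]) hlamnn
      have hηp0 : ηplus = 0 := by rw [hηps, hβ0, hs0]; simp
      have hcpos : 0 < c := lt_of_le_of_ne hc (by rw [hηp0] at hceq; exact Ne.symm (by simpa using hceq))
      set w : ℝ → ℝ := fun t => c⁻¹ + cN*(T - t) with hw
      have hwge : ∀ t ∈ Icc (0:ℝ) T, c⁻¹ ≤ w t := by
        intro t ht
        have : 0 ≤ cN * (T - t) := mul_nonneg hcNpos.le (by linarith [ht.2])
        simp only [hw]; linarith
      have hwpos : ∀ t ∈ Icc (0:ℝ) T, 0 < w t := fun t ht =>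
        lt_of_lt_of_le (inv_pos.mpr hcpos) (hwge t ht)
      have hw' : ∀ t : ℝ, HasDerivAt w (-cN) t := by
        intro t
        have h1 := (((hasDerivAt_const t T).sub (hasDerivAt_id t)).const_mul cN).const_add c⁻¹
        refine h1.congr_deriv ?_
        ring
      refine ⟨fun t => (w t)⁻¹, ?_, ?_, ?_⟩
      · intro t ht
        have hne : w t ≠ 0 := (hwpos t ht).ne'
        have h2 := (hw' t).inv hne
        refine h2.congr_deriv ?_
        rw [hβ0, hl0]
        field_simp
        ring
      · simp only [hw]
        simp
      · intro t ht
        have hpos : 0 < (w t)⁻¹ := inv_pos.mpr (hwpos t ht)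
        have hle : (w t)⁻¹ ≤ c := by
          have h1 : (w t)⁻¹ ≤ (c⁻¹)⁻¹ :=
            inv_anti₀ (inv_pos.mpr hcpos) (hwge t ht)
          simpa using h1
        refine ⟨?_, le_trans hle (le_max_left _ _), hpos.le⟩
        rw [hηp0]
        exact le_trans (min_le_right _ _) hpos.le
    · -- main case: s > 0
      have hspos : 0 < s := lt_of_le_of_ne hsnn (Ne.symm hs0)
      set u0 : ℝ := c - ηplus with hu0def
      have hu0ne : u0 ≠ 0 := sub_ne_zero.mpr hceq
      set δ : ℝ := 2*s with hδ
      have hδpos : 0 < δ := by positivity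
      set A : ℝ := 1/u0 + cN/δ with hA
      have hnum : δ + cN*u0 = s + cN*c + βt := by
        simp only [hu0def, hδ]
        rw [mul_sub, hcNη]; ring
      have hnumpos : 0 < δ + cN*u0 := by
        rw [hnum]
        have := mul_nonneg hcNpos.le hc
        linarith
      have hδne : δ ≠ 0 := ne_of_gt hδpos
      have hAu : A = (δ + cN*u0)/(δ*u0) := by
        rw [hA, div_add_div _ _ hu0ne hδne, mul_comm u0 δ]
        congr 1
        ring
      clear_value u0 δ A
      set w : ℝ → ℝ := fun t => A * Real.exp (δ*(T - t)) - cN/δ with hw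
      clear_value w
      have hwT : w T = 1/u0 := by
        simp only [hw, sub_self, mul_zero, Real.exp_zero, mul_one, hA]
        ring
      have hexp1 : ∀ t ∈ Icc (0:ℝ) T, 1 ≤ Real.exp (δ*(T - t)) := by
        intro t ht
        apply Real.one_le_exp
        have h0 : 0 ≤ T - t := by linarith [ht.2]
        exact mul_nonneg hδpos.le h0
      have hw' : ∀ t : ℝ, HasDerivAt w (-(δ * (A * Real.exp (δ*(T - t))))) t := by
        intro t
        have h1 : HasDerivAt (fun t : ℝ => δ*(T - t)) (-δ) t := by
          simpa using ((hasDerivAt_const t T).sub (hasDerivAt_id t)).const_mul δ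
        have h2 := ((h1.exp).const_mul A).sub_const (cN/δ)
        rw [hw]
        refine h2.congr_deriv ?_
        ring
      -- the two sign cases
      have key : ∀ t ∈ Icc (0:ℝ) T, (w t ≠ 0) ∧
          (min c ηplus ≤ ηplus + (w t)⁻¹ ∧ ηplus + (w t)⁻¹ ≤ max c ηplus ∧
            0 ≤ ηplus + (w t)⁻¹) := by
        intro t ht
        rcases lt_or_gt_of_ne hu0ne with hneg | hpos
        · -- u0 < 0 : A < 0, w t ≤ 1/u0 < 0
          have hApos : A < 0 := by
            rw [hAu]
            apply div_neg_of_pos_of_neg hnumpos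
            exact mul_neg_of_pos_of_neg hδpos hneg
          have hwub : w t ≤ 1/u0 := by
            have h1 : A * Real.exp (δ*(T - t)) ≤ A * 1 := by
              apply mul_le_mul_of_nonpos_left (hexp1 t ht) hApos.le
            have h2 : A * 1 - cN/δ = 1/u0 := by rw [mul_one, hA]; ring
            simp only [hw]; linarith
          have h1u0 : 1/u0 < 0 := by
            apply div_neg_of_pos_of_neg one_pos hneg
          have hwneg : w t < 0 := lt_of_le_of_lt hwub h1u0
          have hinvneg : (w t)⁻¹ < 0 := inv_lt_zero.mpr hwneg
          have hinvge : u0 ≤ (w t)⁻¹ := by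
            have h1 : (1/u0)⁻¹ ≤ (w t)⁻¹ := (inv_le_inv_of_neg h1u0 hwneg).mpr hwub
            rwa [one_div, inv_inv] at h1
          refine ⟨hwneg.ne, ?_, ?_, ?_⟩
          · have : c ≤ ηplus + (w t)⁻¹ := by simp only [hu0def] at hinvge; linarith
            exact le_trans (min_le_left _ _) this
          · have : ηplus + (w t)⁻¹ ≤ ηplus := by linarith
            exact le_trans this (le_max_right _ _)
          · have : c ≤ ηplus + (w t)⁻¹ := by simp only [hu0def] at hinvge; linarith
            linarith
        · -- u0 > 0 : A > 0, w t ≥ 1/u0 > 0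
          have hApos : 0 < A := by
            rw [hAu]
            exact div_pos hnumpos (mul_pos hδpos hpos)
          have hwlb : 1/u0 ≤ w t := by
            have h1 : A * 1 ≤ A * Real.exp (δ*(T - t)) :=
              mul_le_mul_of_nonneg_left (hexp1 t ht) hApos.le
            have h2 : A * 1 - cN/δ = 1/u0 := by rw [mul_one, hA]; ring
            simp only [hw]; linarith
          have h1u0 : 0 < 1/u0 := div_pos one_pos hpos
          have hwpos : 0 < w t := lt_of_lt_of_le h1u0 hwlb
          have hinvpos : 0 < (w t)⁻¹ := inv_pos.mpr hwpos
          have hinvle : (w t)⁻¹ ≤ u0 := by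
            have h1 : (w t)⁻¹ ≤ (1/u0)⁻¹ := inv_anti₀ h1u0 hwlb
            rwa [one_div, inv_inv] at h1
          refine ⟨hwpos.ne', ?_, ?_, ?_⟩
          · have : ηplus ≤ ηplus + (w t)⁻¹ := by linarith
            exact le_trans (min_le_right _ _) this
          · have : ηplus + (w t)⁻¹ ≤ c := by simp only [hu0def] at hinvle; linarith
            exact le_trans this (le_max_left _ _)
          · linarith
      refine ⟨fun t => ηplus + (w t)⁻¹, ?_, ?_, fun t ht => (key t ht).2⟩
      · intro t ht
        have hwne : w t ≠ 0 := (key t ht).1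
        have h2 := ((hw' t).inv hwne).const_add ηplus
        refine h2.congr_deriv ?_
        have hAe : A * Real.exp (δ*(T - t)) = w t + cN/δ := by simp only [hw]; ring
        have halg := riccati_alg βt cN lam ηplus δ (w t) hwne hδdef hroot
        rw [← halg]
        rw [hAe]
        field_simp
      · show ηplus + (w T)⁻¹ = c
        rw [hwT, one_div, inv_inv, hu0def]
        ring
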